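/- Let the braid monoid B⁺_∞ act on a set X, let X^n := {x ∈ X : σ_k · x = x for all k ≥ n+2}, and suppose x ∈ X^n. Then for all N ≥ 1, applying the composition (σ_{n+1}⋯σ_{n+N})(σ_{n+1}⋯σ_{n+N-1})⋯(σ_{n+1}) to x equals applying σ_{n+N} σ_{n+N-1} ⋯ σ_{n+1} to x. -/
import Mathlib


/-- Action of the increasing word `σ_i σ_{i+1} ⋯ σ_j` on `x`:
`seqAct a i j x = a i (a (i+1) (⋯ (a j x)))`. -/
def seqAct {X : Type*} (a : ℕ → X → X) (i j : ℕ) (x : X) : X :=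
  ((List.range (j + 1 - i)).map (fun t => a (i + t))).foldr (fun f y => f y) x

/-- Action of the word `(σ_{n+1}⋯σ_{n+N})(σ_{n+1}⋯σ_{n+N-1})⋯(σ_{n+1})` on `x`
(the rightmost factor acting first). -/
def iterAct {X : Type*} (a : ℕ → X → X) (n : ℕ) : ℕ → X → X
  | 0, x => x
  | N + 1, x => seqAct a (n + 1) (n + N + 1) (iterAct a n N x)

def decAct {X : Type*} (a : ℕ → X → X) (n N : ℕ) (x : X) : X :=
  ((List.range N).map (fun t => a (n + N - t))).foldr (fun f y => f y) x

lemma seqAct_of_lt {X : Type*} (a : ℕ → X → X) {i j : ℕ} (h : j < i) (x : X) :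
    seqAct a i j x = x := by
  simp [seqAct, Nat.sub_eq_zero_of_le h]

lemma seqAct_peel {X : Type*} (a : ℕ → X → X) {i j : ℕ} (h : i ≤ j) (x : X) :
    seqAct a i j x = a i (seqAct a (i + 1) j x) := by
  unfold seqAct
  have h1 : j + 1 - i = (j - i) + 1 := by omega
  have h2 : j + 1 - (i + 1) = j - i := by omega
  rw [h1, h2, List.range_succ_eq_map, List.map_cons, List.foldr_cons, List.map_map]
  have he : ((fun t => a (i + t)) ∘ Nat.succ) = fun t => a (i + 1 + t) := by
    funext t
    show a (i + (t + 1)) = a (i + 1 + t)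
    rw [show i + (t + 1) = i + 1 + t from by omega]
  rw [he, Nat.add_zero]

lemma seqAct_peel_last {X : Type*} (a : ℕ → X → X) {i j : ℕ} (h : i ≤ j + 1) (x : X) :
    seqAct a i (j + 1) x = seqAct a i j (a (j + 1) x) := by
  unfold seqAct
  have h1 : j + 1 + 1 - i = (j + 1 - i) + 1 := by omega
  rw [h1, List.range_succ, List.map_append, List.foldr_append]
  simp only [List.map_cons, List.map_nil, List.foldr_cons, List.foldr_nil]
  have h3 : i + (j + 1 - i) = j + 1 := by omega
  rw [h3]

lemma seqAct_fix {X : Type*} (a : ℕ → X → X) {i : ℕ} {x : X}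
    (h : ∀ m, i ≤ m → a m x = x) : ∀ j, seqAct a i j x = x := by
  intro j
  induction j with
  | zero =>
    rcases Nat.eq_zero_or_pos i with rfl | hi
    · show seqAct a 0 0 x = x
      rw [seqAct_peel a (le_refl 0), seqAct_of_lt a (by omega), h 0 (by omega)]
    · exact seqAct_of_lt a hi x
  | succ j ih =>
    rcases le_or_gt i (j + 1) with hle | hlt
    · rw [seqAct_peel_last a hle, h (j + 1) hle, ih]
    · exact seqAct_of_lt a hlt x

lemma decAct_succ {X : Type*} (a : ℕ → X → X) (n N : ℕ) (x : X) :
    decAct a n (N + 1) x = a (n + N + 1) (decAct a n N x) := by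
  unfold decAct
  rw [List.range_succ_eq_map, List.map_cons, List.foldr_cons, List.map_map]
  have he : ((fun t => a (n + (N + 1) - t)) ∘ Nat.succ) = fun t => a (n + N - t) := by
    funext t
    show a (n + (N + 1) - (t + 1)) = a (n + N - t)
    rw [show n + (N + 1) - (t + 1) = n + N - t from by omega]
  rw [he, show n + (N + 1) - 0 = n + N + 1 from by omega]

lemma decAct_peel_inner {X : Type*} (a : ℕ → X → X) (n N : ℕ) (x : X) :
    decAct a n (N + 1) x = decAct a (n + 1) N (a (n + 1) x) := by
  unfold decAct
  rw [List.range_succ, List.map_append, List.foldr_append]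
  simp only [List.map_cons, List.map_nil, List.foldr_cons, List.foldr_nil]
  rw [show n + (N + 1) - N = n + 1 from by omega,
    show n + (N + 1) = n + 1 + N from by omega]

lemma seqAct_comm_far {X : Type*} (a : ℕ → X → X)
    (hB2 : ∀ i j, 1 ≤ i → i + 1 < j → ∀ x, a i (a j x) = a j (a i x))
    {j : ℕ} (hj : 1 ≤ j) :
    ∀ k i y, j + 1 < i → seqAct a i k (a j y) = a j (seqAct a i k y) := by
  intro k
  induction k with
  | zero =>
    intro i y hi
    rw [seqAct_of_lt a (by omega), seqAct_of_lt a (by omega)]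
  | succ k ih =>
    intro i y hi
    rcases le_or_gt i (k + 1) with hle | hlt
    · rw [seqAct_peel_last a hle, seqAct_peel_last a hle,
        ← hB2 j (k + 1) hj (by omega), ih i _ hi]
    · rw [seqAct_of_lt a hlt, seqAct_of_lt a hlt]

lemma seqAct_comm_single {X : Type*} (a : ℕ → X → X)
    (hB1 : ∀ i, 1 ≤ i → ∀ x, a i (a (i + 1) (a i x)) = a (i + 1) (a i (a (i + 1) x)))
    (hB2 : ∀ i j, 1 ≤ i → i + 1 < j → ∀ x, a i (a j x) = a j (a i x))
    (i j k : ℕ) (y : X) (h1 : 1 ≤ i) (hij : i ≤ j) (hjk : j < k) :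
    seqAct a i k (a j y) = a (j + 1) (seqAct a i k y) := by
  rcases eq_or_lt_of_le hij with rfl | hlt
  · rw [seqAct_peel a (show i ≤ k by omega), seqAct_peel a (show i + 1 ≤ k by omega),
      seqAct_comm_far a hB2 h1 k (i + 2) y (by omega), hB1 i h1,
      seqAct_peel a (show i ≤ k by omega), seqAct_peel a (show i + 1 ≤ k by omega)]
  · rw [seqAct_peel a (show i ≤ k by omega), seqAct_peel a (show i ≤ k by omega),
      seqAct_comm_single a hB1 hB2 (i + 1) j k y (by omega) (by omega) hjk,
      hB2 i (j + 1) h1 (by omega)]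
termination_by j - i

lemma seqAct_decAct {X : Type*} (a : ℕ → X → X)
    (hB1 : ∀ i, 1 ≤ i → ∀ x, a i (a (i + 1) (a i x)) = a (i + 1) (a i (a (i + 1) x)))
    (hB2 : ∀ i j, 1 ≤ i → i + 1 < j → ∀ x, a i (a j x) = a j (a i x)) (n : ℕ) :
    ∀ M i k y, 1 ≤ i → i ≤ n + 1 → n + M < k →
      seqAct a i k (decAct a n M y) = decAct a (n + 1) M (seqAct a i k y) := by
  intro M
  induction M with
  | zero => intro i k y _ _ _; simp [decAct]
  | succ M ih =>
    intro i k y h1 hin h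
    rw [decAct_succ, seqAct_comm_single a hB1 hB2 i (n + M + 1) k _ h1 (by omega) h,
      ih i k y h1 hin (by omega), decAct_succ,
      show n + 1 + M + 1 = n + M + 1 + 1 from by omega]

theorem iterAct_eq_decreasing_word' {X : Type*} (a : ℕ → X → X)
    (hB1 : ∀ i, 1 ≤ i → ∀ x, a i (a (i + 1) (a i x)) = a (i + 1) (a i (a (i + 1) x)))
    (hB2 : ∀ i j, 1 ≤ i → i + 1 < j → ∀ x, a i (a j x) = a j (a i x))
    (n : ℕ) (x : X) (hx : ∀ m, n + 2 ≤ m → a m x = x) (N : ℕ) (hN : 1 ≤ N) :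
    iterAct a n N x = decAct a n N x := by
  induction N, hN using Nat.le_induction with
  | base =>
    show seqAct a (n + 1) (n + 0 + 1) x = decAct a n 1 x
    rw [show n + 0 + 1 = n + 1 from by omega,
      seqAct_peel a (le_refl (n + 1)), seqAct_of_lt a (by omega)]
    simp [decAct, List.range_succ]
  | succ N hN ih =>
    show seqAct a (n + 1) (n + N + 1) (iterAct a n N x) = decAct a n (N + 1) x
    rw [ih, seqAct_decAct a hB1 hB2 n N (n + 1) (n + N + 1) x (by omega) (le_refl _) (by omega),
      seqAct_peel a (show n + 1 ≤ n + N + 1 by omega),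
      seqAct_fix a (fun m hm => hx m (by omega)) (n + N + 1),
      decAct_peel_inner]

/-- Lemma 3.2: if `x ∈ X^n`, i.e. `σ_m · x = x` for all `m ≥ n+2`, then for `N ≥ 1` the
word `(σ_{n+1}⋯σ_{n+N})(σ_{n+1}⋯σ_{n+N-1})⋯σ_{n+1}` applied to `x` equals the decreasing
word `σ_{n+N} σ_{n+N-1} ⋯ σ_{n+1}` applied to `x`. -/
theorem iterAct_eq_decreasing_word {X : Type*} (a : ℕ → X → X)
    (hB1 : ∀ i, 1 ≤ i → ∀ x, a i (a (i + 1) (a i x)) = a (i + 1) (a i (a (i + 1) x)))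
    (hB2 : ∀ i j, 1 ≤ i → i + 1 < j → ∀ x, a i (a j x) = a j (a i x))
    (n : ℕ) (x : X) (hx : ∀ m, n + 2 ≤ m → a m x = x) (N : ℕ) (hN : 1 ≤ N) :
    iterAct a n N x
      = ((List.range N).map (fun t => a (n + N - t))).foldr (fun f y => f y) x := by
  exact iterAct_eq_decreasing_word' a hB1 hB2 n x hx N hN
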